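/- Let ξ = (ξ_n)_{n∈ℕ} be a minimal sequence that is also a lower semi-frame of H (so that D(C_ξ) is automatically dense in H). Then S_ξ = T_ξ (equality of operators, including domains) if and only if ξ is a Schauder basis of H. -/

import Mathlib

noncomputable section
open scoped InnerProductSpace ComplexInnerProductSpace ComplexConjugate ENNReal
open Filter Topology

/- `H` is a separable complex Hilbert space. -/
variable {H : Type} [NormedAddCommGroup H] [InnerProductSpace ℂ H] [CompleteSpace H]
  [TopologicalSpace.SeparableSpace H]

/-- The space `ℓ²(ℕ)` of square-summable complex sequences. -/
abbrev l2 : Type := lp (fun _ : ℕ => ℂ) 2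

/-- The domain of the analysis operator `C_ξ`:
`D(C_ξ) = {f ∈ H : Σ_n |⟨f,ξ_n⟩|² < ∞}`.  (The paper's inner product `⟨f,ξ_n⟩`, linear in `f`,
is `⟪ξ n, f⟫_ℂ` in Mathlib's convention.) -/
def domC (ξ : ℕ → H) : Set H := {f : H | Memℓp (fun n => ⟪ξ n, f⟫_ℂ) 2}

open Classical in
/-- The analysis operator `C_ξ f = (⟨f,ξ_n⟩)_n`, with junk value `0` outside of its domain. -/
def Cfun (ξ : ℕ → H) (f : H) : l2 :=
  if h : Memℓp (fun n => ⟪ξ n, f⟫_ℂ) 2 then ⟨_, h⟩ else 0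

/-- The domain of the synthesis operator `D_ξ`:
`D(D_ξ) = {(c_n) ∈ ℓ² : Σ_n c_n ξ_n converges in norm in H}`. -/
def domD (ξ : ℕ → H) : Set l2 :=
  {c : l2 | ∃ L : H, Tendsto (fun k : ℕ => ∑ n ∈ Finset.range k, c n • ξ n) atTop (𝓝 L)}

/-- The domain of the frame operator `S_ξ`:
`D(S_ξ) = {f ∈ H : Σ_n ⟨f,ξ_n⟩ ξ_n converges in norm in H}`. -/
def domS (ξ : ℕ → H) : Set H :=
  {f : H | ∃ L : H, Tendsto (fun k : ℕ => ∑ n ∈ Finset.range k, ⟪ξ n, f⟫_ℂ • ξ n) atTop (𝓝 L)}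

/-- The domain of the generalized frame operator `T_ξ`: those `f ∈ D(C_ξ)` for which there is
`h` in `H_ξ = closure D(C_ξ)` with `Σ_n ⟨f,ξ_n⟩⟨ξ_n,g⟩ = ⟨h,g⟩` for all `g ∈ D(C_ξ)`. -/
def domT (ξ : ℕ → H) : Set H :=
  {f : H | f ∈ domC ξ ∧ ∃ h ∈ closure (domC ξ), ∀ g ∈ domC ξ,
    ∑' n : ℕ, ⟪ξ n, f⟫_ℂ * ⟪g, ξ n⟫_ℂ = ⟪g, h⟫_ℂ}

/-- The domain of `Q_ξ`: those `(c_n) ∈ ℓ²` whose partial sums `Σ_{n<k} c_n ξ_n`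
converge weakly in `H`. -/
def domQ (ξ : ℕ → H) : Set l2 :=
  {c : l2 | ∃ L : H, ∀ y : H,
    Tendsto (fun k : ℕ => ⟪y, ∑ n ∈ Finset.range k, c n • ξ n⟫_ℂ) atTop (𝓝 ⟪y, L⟫_ℂ)}

/-- The domain of the weak frame operator `W_ξ`: those `f ∈ H` whose partial sums
`Σ_{n<k} ⟨f,ξ_n⟩ ξ_n` converge weakly in `H`. -/
def domW (ξ : ℕ → H) : Set H :=
  {f : H | ∃ L : H, ∀ y : H,
    Tendsto (fun k : ℕ => ⟪y, ∑ n ∈ Finset.range k, ⟪ξ n, f⟫_ℂ • ξ n⟫_ℂ) atTop (𝓝 ⟪y, L⟫_ℂ)}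


set_option linter.unusedSectionVars false

def st11Dsub (ξ : ℕ → H) : Submodule ℂ H where
  carrier := domC ξ
  add_mem' := by
    intro f g hf hg
    have h : (fun n => ⟪ξ n, f + g⟫_ℂ) = (fun n => ⟪ξ n, f⟫_ℂ) + fun n => ⟪ξ n, g⟫_ℂ := by
      funext n; simp [inner_add_right]
    change Memℓp (fun n => ⟪ξ n, f + g⟫_ℂ) 2; rw [h]; exact Memℓp.add hf hg
  zero_mem' := by
    have h : (fun n => ⟪ξ n, (0 : H)⟫_ℂ) = 0 := by funext n; simp
    change Memℓp (fun n => ⟪ξ n, (0 : H)⟫_ℂ) 2; rw [h]; exact zero_memℓp (E := fun _ : ℕ => ℂ) (p := (2 : ℝ≥0∞))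
  smul_mem' := by
    intro c f hf
    have h : (fun n => ⟪ξ n, c • f⟫_ℂ) = c • fun n => ⟪ξ n, f⟫_ℂ := by
      funext n; simp [inner_smul_right]
    change Memℓp (fun n => ⟪ξ n, c • f⟫_ℂ) 2; rw [h]; exact Memℓp.const_smul hf c

lemma st11_mem_Dsub {ξ : ℕ → H} {f : H} : f ∈ st11Dsub ξ ↔ f ∈ domC ξ := Iff.rfl

def st11C (ξ : ℕ → H) : st11Dsub ξ →ₗ[ℂ] l2 where
  toFun f := ⟨fun n => ⟪ξ n, (f : H)⟫_ℂ, f.2⟩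
  map_add' f g := by
    apply lp.ext
    funext n
    simp [inner_add_right]; rfl
  map_smul' c f := by
    apply lp.ext
    funext n
    simp [inner_smul_right]

lemma st11C_apply {ξ : ℕ → H} (f : st11Dsub ξ) (n : ℕ) : (st11C ξ f) n = ⟪ξ n, (f : H)⟫_ℂ := rfl

lemma st11_rpw (x : ℝ) : x ^ ((2 : ℝ≥0∞).toReal) = x ^ 2 := by norm_num

lemma st11_summable {ξ : ℕ → H} {f : H} (hf : f ∈ domC ξ) :
    Summable fun n => ‖⟪ξ n, f⟫_ℂ‖ ^ 2 := by
  have h := (memℓp_gen_iff (by norm_num : 0 < (2 : ℝ≥0∞).toReal)).1 hf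
  simpa [st11_rpw] using h

lemma st11_norm_sq_eq (x : l2) : ‖x‖ ^ 2 = ∑' n, ‖x n‖ ^ 2 := by
  have h := lp.norm_rpow_eq_tsum (p := 2) (by norm_num) x
  norm_num at h
  exact h

lemma st11_low_real (ξ : ℕ → H) {A : ℝ}
    (hlow : ∀ f : H, ENNReal.ofReal (A * ‖f‖ ^ 2) ≤ ∑' n : ℕ, ((‖⟪ξ n, f⟫_ℂ‖₊ : ℝ≥0∞) ^ 2))
    {f : H} (hf : f ∈ domC ξ) :
    A * ‖f‖ ^ 2 ≤ ∑' n, ‖⟪ξ n, f⟫_ℂ‖ ^ 2 := by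
  have hsum := st11_summable hf
  have h1 : ∀ n : ℕ, ((‖⟪ξ n, f⟫_ℂ‖₊ : ℝ≥0∞)) ^ 2 = ENNReal.ofReal (‖⟪ξ n, f⟫_ℂ‖ ^ 2) := by
    intro n
    rw [ENNReal.ofReal_pow (norm_nonneg _), ofReal_norm]; rfl
  have h2 : (∑' n : ℕ, ((‖⟪ξ n, f⟫_ℂ‖₊ : ℝ≥0∞) ^ 2))
      = ENNReal.ofReal (∑' n, ‖⟪ξ n, f⟫_ℂ‖ ^ 2) := by
    rw [ENNReal.ofReal_tsum_of_nonneg (fun n => sq_nonneg _) hsum]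
    simp_rw [h1]
  have h3 := hlow f
  rw [h2, ENNReal.ofReal_le_ofReal_iff (tsum_nonneg fun n => sq_nonneg _)] at h3
  exact h3

lemma st11_normC_sq (ξ : ℕ → H) {A : ℝ}
    (hlow : ∀ f : H, ENNReal.ofReal (A * ‖f‖ ^ 2) ≤ ∑' n : ℕ, ((‖⟪ξ n, f⟫_ℂ‖₊ : ℝ≥0∞) ^ 2))
    (f : st11Dsub ξ) :
    A * ‖(f : H)‖ ^ 2 ≤ ‖st11C ξ f‖ ^ 2 := by
  rw [st11_norm_sq_eq]
  exact st11_low_real ξ hlow f.2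

lemma st11_norm_le (ξ : ℕ → H) {A : ℝ} (hA : 0 < A)
    (hlow : ∀ f : H, ENNReal.ofReal (A * ‖f‖ ^ 2) ≤ ∑' n : ℕ, ((‖⟪ξ n, f⟫_ℂ‖₊ : ℝ≥0∞) ^ 2))
    (f : st11Dsub ξ) :
    ‖(f : H)‖ ≤ Real.sqrt A⁻¹ * ‖st11C ξ f‖ := by
  have h := st11_normC_sq ξ hlow f
  have h2 : ‖(f : H)‖ ^ 2 ≤ (Real.sqrt A⁻¹ * ‖st11C ξ f‖) ^ 2 := by
    rw [mul_pow, Real.sq_sqrt (by positivity)]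
    rw [inv_mul_eq_div, le_div_iff₀ (by positivity)]
    nlinarith [h]
  exact (pow_le_pow_iff_left₀ (norm_nonneg _) (by positivity) (by norm_num)).1 h2

lemma st11_range_closed (ξ : ℕ → H) {A : ℝ} (hA : 0 < A)
    (hlow : ∀ f : H, ENNReal.ofReal (A * ‖f‖ ^ 2) ≤ ∑' n : ℕ, ((‖⟪ξ n, f⟫_ℂ‖₊ : ℝ≥0∞) ^ 2)) :
    IsClosed ((LinearMap.range (st11C ξ) : Submodule ℂ l2) : Set l2) := by
  apply IsSeqClosed.isClosed
  intro x v hxmem hxv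
  -- choose preimages
  have hch : ∀ j : ℕ, ∃ F : st11Dsub ξ, st11C ξ F = x j := fun j => hxmem j
  choose F hF using hch
  -- the sequence F is Cauchy in H
  set s := Real.sqrt A⁻¹ with hs
  have hs0 : 0 ≤ s := Real.sqrt_nonneg _
  have hxc : CauchySeq x := hxv.cauchySeq
  have hFc : CauchySeq fun j => ((F j : H)) := by
    rw [Metric.cauchySeq_iff]
    intro ε hε
    have hε' : 0 < ε / (s + 1) := by positivity
    obtain ⟨N, hN⟩ := Metric.cauchySeq_iff.1 hxc (ε / (s + 1)) hε'
    refine ⟨N, fun m hm n hn => ?_⟩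
    have h1 : dist ((F m : H)) ((F n : H)) ≤ s * dist (x m) (x n) := by
      rw [dist_eq_norm, dist_eq_norm, hs]
      have h2 := st11_norm_le ξ hA hlow (F m - F n)
      rw [map_sub, hF, hF] at h2
      exact h2
    have h3 : s * dist (x m) (x n) ≤ s * (ε / (s + 1)) :=
      mul_le_mul_of_nonneg_left (hN m hm n hn).le hs0
    have h4 : s * (ε / (s + 1)) < ε := by
      rw [mul_div_assoc']
      rw [div_lt_iff₀ (by positivity)]
      nlinarith
    exact lt_of_le_of_lt (h1.trans h3) h4
  obtain ⟨f, hf⟩ := cauchySeq_tendsto_of_complete hFc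
  have hcoord : ∀ n : ℕ, v n = ⟪ξ n, f⟫_ℂ := by
    intro n
    have t2 : Tendsto (fun j => (x j) n) atTop (𝓝 ⟪ξ n, f⟫_ℂ) := by
      have : ∀ j, (x j) n = ⟪ξ n, ((F j : H))⟫_ℂ := by
        intro j; rw [← hF j]; rfl
      simp_rw [this]
      exact tendsto_const_nhds.inner hf
    have t1 : Tendsto (fun j => (x j) n) atTop (𝓝 (v n)) := by
      rw [tendsto_iff_dist_tendsto_zero]
      apply squeeze_zero (fun j => dist_nonneg)
        (g := fun j => dist (x j) v)
      · intro j
        rw [dist_eq_norm, dist_eq_norm]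
        have : x j n - v n = (x j - v) n := by simp [lp.coeFn_sub]
        rw [this]
        exact lp.norm_apply_le_norm (by norm_num) (x j - v) n
      · exact tendsto_iff_dist_tendsto_zero.1 hxv
    exact tendsto_nhds_unique t1 t2
  have hfC : f ∈ domC ξ := by
    have : (fun n => ⟪ξ n, f⟫_ℂ) = (v : ℕ → ℂ) := funext fun n => (hcoord n).symm
    rw [domC, Set.mem_setOf_eq, this]
    exact lp.memℓp v
  exact ⟨⟨f, hfC⟩, by apply lp.ext; funext n; exact (hcoord n).symm⟩

lemma st11_hasSum_inner {ξ : ℕ → H} {f g : H} (hf : f ∈ domC ξ) (hg : g ∈ domC ξ) :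
    HasSum (fun n => ⟪ξ n, f⟫_ℂ * ⟪g, ξ n⟫_ℂ)
      (inner (𝕜 := ℂ) (⟨fun n => ⟪ξ n, g⟫_ℂ, hg⟩ : l2) (⟨fun n => ⟪ξ n, f⟫_ℂ, hf⟩ : l2)) := by
  have h := lp.hasSum_inner (𝕜 := ℂ) (⟨fun n => ⟪ξ n, g⟫_ℂ, hg⟩ : l2)
    (⟨fun n => ⟪ξ n, f⟫_ℂ, hf⟩ : l2)
  have he : (fun n => inner (𝕜 := ℂ) ((⟨fun n => ⟪ξ n, g⟫_ℂ, hg⟩ : l2) n)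
      ((⟨fun n => ⟪ξ n, f⟫_ℂ, hf⟩ : l2) n)) = fun n => ⟪ξ n, f⟫_ℂ * ⟪g, ξ n⟫_ℂ := by
    funext n
    rw [RCLike.inner_apply,
      show ((⟨fun n => ⟪ξ n, g⟫_ℂ, hg⟩ : l2) n) = ⟪ξ n, g⟫_ℂ from rfl,
      show ((⟨fun n => ⟪ξ n, f⟫_ℂ, hf⟩ : l2) n) = ⟪ξ n, f⟫_ℂ from rfl,
      inner_conj_symm]
  rw [← he]
  exact h

/-- Existence of a weak solution of `T f = h` : the Riesz / Lax-Milgram step. -/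
lemma st11_weak_solution (ξ : ℕ → H) {A : ℝ} (hA : 0 < A)
    (hlow : ∀ f : H, ENNReal.ofReal (A * ‖f‖ ^ 2) ≤ ∑' n : ℕ, ((‖⟪ξ n, f⟫_ℂ‖₊ : ℝ≥0∞) ^ 2))
    (h : H) :
    ∃ f ∈ domC ξ, ∀ g ∈ domC ξ,
      ∑' n : ℕ, ⟪ξ n, f⟫_ℂ * ⟪g, ξ n⟫_ℂ = ⟪g, h⟫_ℂ := by
  classical
  have hinj : Function.Injective (st11C ξ) := by
    intro a b hab
    have h2 := st11_norm_le ξ hA hlow (a - b)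
    rw [map_sub, hab, sub_self, norm_zero, mul_zero] at h2
    have h3 : ((a - b : st11Dsub ξ) : H) = 0 := norm_le_zero_iff.1 h2
    have h4 : a - b = 0 := by exact_mod_cast ZeroMemClass.coe_eq_zero.1 h3
    exact sub_eq_zero.1 h4
  set V : Submodule ℂ l2 := LinearMap.range (st11C ξ) with hV
  haveI : CompleteSpace V := (st11_range_closed ξ hA hlow).completeSpace_coe
  set e : st11Dsub ξ ≃ₗ[ℂ] V := LinearEquiv.ofInjective (st11C ξ) hinj with he
  have hecoe : ∀ u : st11Dsub ξ, ((e u : V) : l2) = st11C ξ u := fun u => rfl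
  set φ₀ : V →ₗ[ℂ] ℂ :=
    (innerSL ℂ h).toLinearMap ∘ₗ ((st11Dsub ξ).subtype ∘ₗ (e.symm : V →ₗ[ℂ] st11Dsub ξ)) with hφ₀
  have hφ₀_apply : ∀ v : V, φ₀ v = ⟪h, ((e.symm v : st11Dsub ξ) : H)⟫_ℂ := fun v => rfl
  have hbound : ∀ v : V, ‖φ₀ v‖ ≤ (‖h‖ * Real.sqrt A⁻¹) * ‖v‖ := by
    intro v
    rw [hφ₀_apply]
    have hsy : st11C ξ (e.symm v) = (v : l2) := by
      rw [← hecoe (e.symm v), e.apply_symm_apply]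
    calc ‖⟪h, ((e.symm v : st11Dsub ξ) : H)⟫_ℂ‖
        ≤ ‖h‖ * ‖((e.symm v : st11Dsub ξ) : H)‖ := norm_inner_le_norm _ _
      _ ≤ ‖h‖ * (Real.sqrt A⁻¹ * ‖st11C ξ (e.symm v)‖) :=
          mul_le_mul_of_nonneg_left (st11_norm_le ξ hA hlow _) (norm_nonneg h)
      _ = (‖h‖ * Real.sqrt A⁻¹) * ‖v‖ := by rw [hsy, mul_assoc]; rfl
  set φ : V →L[ℂ] ℂ := LinearMap.mkContinuous φ₀ (‖h‖ * Real.sqrt A⁻¹) hbound with hφ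
  obtain ⟨w, hw⟩ : ∃ w : V, ∀ v : V, ⟪w, v⟫_ℂ = φ v :=
    ⟨(InnerProductSpace.toDual ℂ V).symm φ, fun v => InnerProductSpace.toDual_symm_apply⟩
  have hfd : ((e.symm w : st11Dsub ξ) : H) ∈ domC ξ := (e.symm w).2
  refine ⟨((e.symm w : st11Dsub ξ) : H), hfd, ?_⟩
  intro g hg
  have hS := st11_hasSum_inner (ξ := ξ) hfd hg
  rw [hS.tsum_eq]
  have hvg : (st11C ξ ⟨g, hg⟩ : l2) ∈ V := ⟨⟨g, hg⟩, rfl⟩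
  have hwcoe : (w : l2) = st11C ξ (e.symm w) := by
    rw [← hecoe (e.symm w), e.apply_symm_apply]
  have hevg : e ⟨g, hg⟩ = ⟨st11C ξ ⟨g, hg⟩, hvg⟩ := by
    apply Subtype.ext
    rw [hecoe]
  have hstep : inner (𝕜 := ℂ) (⟨fun n => ⟪ξ n, g⟫_ℂ, hg⟩ : l2)
      (⟨fun n => ⟪ξ n, ((e.symm w : st11Dsub ξ) : H)⟫_ℂ, hfd⟩ : l2)
      = inner (𝕜 := ℂ) ((⟨st11C ξ ⟨g, hg⟩, hvg⟩ : V)) w := by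
    rw [Submodule.coe_inner, hwcoe]
    rfl
  rw [hstep]
  calc inner (𝕜 := ℂ) ((⟨st11C ξ ⟨g, hg⟩, hvg⟩ : V)) w
      = conj (inner (𝕜 := ℂ) w ((⟨st11C ξ ⟨g, hg⟩, hvg⟩ : V))) := (inner_conj_symm (E := V) _ _).symm
    _ = conj (φ (⟨st11C ξ ⟨g, hg⟩, hvg⟩ : V)) := by rw [hw]
    _ = conj (⟪h, ((e.symm ⟨st11C ξ ⟨g, hg⟩, hvg⟩ : st11Dsub ξ) : H)⟫_ℂ) := rfl
    _ = conj (⟪h, g⟫_ℂ) := by rw [← hevg, e.symm_apply_apply]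
    _ = ⟪g, h⟫_ℂ := inner_conj_symm _ _

lemma st11_domS_memC {ξ : ℕ → H} {f L : H}
    (hlim : Tendsto (fun m : ℕ => ∑ n ∈ Finset.range m, ⟪ξ n, f⟫_ℂ • ξ n) atTop (𝓝 L)) :
    f ∈ domC ξ := by
  have h1 : Tendsto (fun m : ℕ => ⟪f, ∑ n ∈ Finset.range m, ⟪ξ n, f⟫_ℂ • ξ n⟫_ℂ) atTop
      (𝓝 ⟪f, L⟫_ℂ) := tendsto_const_nhds.inner hlim
  have h2 : ∀ m : ℕ, ⟪f, ∑ n ∈ Finset.range m, ⟪ξ n, f⟫_ℂ • ξ n⟫_ℂ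
      = (((∑ n ∈ Finset.range m, ‖⟪ξ n, f⟫_ℂ‖ ^ 2 : ℝ)) : ℂ) := by
    intro m
    rw [inner_sum]
    push_cast
    refine Finset.sum_congr rfl fun n _ => ?_
    have hz : ⟪f, ξ n⟫_ℂ = conj ⟪ξ n, f⟫_ℂ := by rw [inner_conj_symm]
    rw [inner_smul_right, hz, RCLike.mul_conj]
    norm_cast
  have h3 : Tendsto (fun m : ℕ => (((∑ n ∈ Finset.range m, ‖⟪ξ n, f⟫_ℂ‖ ^ 2 : ℝ)) : ℂ)) atTop
      (𝓝 ⟪f, L⟫_ℂ) := by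
    refine Tendsto.congr (fun m => h2 m) h1
  have h4 : Tendsto (fun m : ℕ => ∑ n ∈ Finset.range m, ‖⟪ξ n, f⟫_ℂ‖ ^ 2) atTop
      (𝓝 (⟪f, L⟫_ℂ).re) := by
    have h5 := (Complex.continuous_re.tendsto _).comp h3
    refine Tendsto.congr (fun m => ?_) h5
    exact Complex.ofReal_re _
  have hmono : Monotone fun m : ℕ => ∑ n ∈ Finset.range m, ‖⟪ξ n, f⟫_ℂ‖ ^ 2 := by
    apply monotone_nat_of_le_succ
    intro m
    rw [Finset.sum_range_succ]
    nlinarith [sq_nonneg ‖⟪ξ m, f⟫_ℂ‖]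
  have hbd : ∀ m : ℕ, ∑ n ∈ Finset.range m, ‖⟪ξ n, f⟫_ℂ‖ ^ 2 ≤ (⟪f, L⟫_ℂ).re :=
    fun m => hmono.ge_of_tendsto h4 m
  apply memℓp_gen
  simpa [st11_rpw] using summable_of_sum_range_le (fun n => sq_nonneg _) hbd

lemma st11_tsum_eq_inner {ξ : ℕ → H} {f g L : H} (hg : g ∈ domC ξ)
    (hL : Tendsto (fun m : ℕ => ∑ n ∈ Finset.range m, ⟪ξ n, f⟫_ℂ • ξ n) atTop (𝓝 L)) :
    ∑' n : ℕ, ⟪ξ n, f⟫_ℂ * ⟪g, ξ n⟫_ℂ = ⟪g, L⟫_ℂ := by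
  have hfC := st11_domS_memC hL
  have hsum := st11_hasSum_inner hfC hg
  rw [hsum.tsum_eq]
  have h1 := hsum.tendsto_sum_nat
  have h2 : Tendsto (fun m : ℕ => ∑ n ∈ Finset.range m, ⟪ξ n, f⟫_ℂ * ⟪g, ξ n⟫_ℂ) atTop
      (𝓝 ⟪g, L⟫_ℂ) := by
    refine Tendsto.congr (fun m => ?_) (tendsto_const_nhds.inner hL)
    rw [inner_sum]
    exact Finset.sum_congr rfl fun n _ => inner_smul_right _ _ _
  exact tendsto_nhds_unique h1 h2

lemma st11_orth_eq (ξ : ℕ → H) : ((st11Dsub ξ).topologicalClosure)ᗮ = (st11Dsub ξ)ᗮ := by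
  rw [← Submodule.orthogonal_orthogonal_eq_closure, Submodule.triorthogonal_eq_orthogonal]

lemma st11_dense_eq (ξ : ℕ → H) (hM : (st11Dsub ξ).topologicalClosure = ⊤)
    {x y : H} (hxy : ∀ g ∈ domC ξ, ⟪g, x⟫_ℂ = ⟪g, y⟫_ℂ) : x = y := by
  have hbot : (st11Dsub ξ)ᗮ = ⊥ := by
    rw [← st11_orth_eq, hM, Submodule.top_orthogonal_eq_bot]
  have hsub : x - y ∈ (st11Dsub ξ)ᗮ := by
    rw [Submodule.mem_orthogonal]
    intro u hu
    rw [inner_sub_right, hxy u hu, sub_self]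
  rw [hbot, Submodule.mem_bot] at hsub
  exact sub_eq_zero.1 hsub

lemma st11_closure_univ (ξ : ℕ → H) (hM : (st11Dsub ξ).topologicalClosure = ⊤) :
    closure (domC ξ) = Set.univ := by
  have h2 : closure ((st11Dsub ξ : Set H)) = Set.univ := by
    rw [← Submodule.topologicalClosure_coe, hM, Submodule.top_coe]
  exact h2

lemma st11_total (ξ : ℕ → H) {A : ℝ} (hA : 0 < A)
    (hlow : ∀ f : H, ENNReal.ofReal (A * ‖f‖ ^ 2) ≤ ∑' n : ℕ, ((‖⟪ξ n, f⟫_ℂ‖₊ : ℝ≥0∞) ^ 2))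
    {u : H} (hu : ∀ n, ⟪ξ n, u⟫_ℂ = 0) : u = 0 := by
  have h := hlow u
  have h0 : (∑' n : ℕ, ((‖⟪ξ n, u⟫_ℂ‖₊ : ℝ≥0∞) ^ 2)) = 0 := by
    simp [hu]
  rw [h0, nonpos_iff_eq_zero, ENNReal.ofReal_eq_zero] at h
  have h1 : ‖u‖ ^ 2 ≤ 0 := by nlinarith
  have h2 : ‖u‖ = 0 := by nlinarith [norm_nonneg u, sq_nonneg ‖u‖]
  exact norm_eq_zero.1 h2

lemma st11_bio (ξ : ℕ → H)
    (hmin : ∀ k : ℕ, ξ k ∉ closure ((Submodule.span ℂ (ξ '' {n : ℕ | n ≠ k}) : Submodule ℂ H) : Set H))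
    (k : ℕ) :
    ∃ v : H, v ∈ domC ξ ∧ v ≠ 0 ∧ (∀ n, n ≠ k → ⟪v, ξ n⟫_ℂ = 0) ∧
      ⟪v, ξ k⟫_ℂ = ((‖v‖ : ℂ)) ^ 2 ∧ (∀ n, n ≠ k → ⟪ξ n, v⟫_ℂ = 0) ∧
      ⟪ξ k, v⟫_ℂ = ((‖v‖ : ℂ)) ^ 2 := by
  set N := (Submodule.span ℂ (ξ '' {n : ℕ | n ≠ k})).topologicalClosure with hN
  haveI : CompleteSpace N := Submodule.topologicalClosure.completeSpace _
  set v := ξ k - (Submodule.orthogonalProjection N (ξ k) : H) with hv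
  have hvortho : v ∈ Nᗮ := Submodule.sub_starProjection_mem_orthogonal (K := N) (ξ k)
  have hmemN : ∀ n, n ≠ k → ξ n ∈ N := fun n hn =>
    Submodule.le_topologicalClosure _ (Submodule.subset_span ⟨n, hn, rfl⟩)
  have hzero : ∀ n, n ≠ k → ⟪v, ξ n⟫_ℂ = 0 := by
    intro n hn
    have := (Submodule.mem_orthogonal N v).1 hvortho _ (hmemN n hn)
    rw [← inner_conj_symm, this, map_zero]
  have hproj : ⟪v, ((Submodule.orthogonalProjection N (ξ k) : N) : H)⟫_ℂ = 0 := by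
    have := (Submodule.mem_orthogonal N v).1 hvortho ((Submodule.orthogonalProjection N (ξ k) : N) : H)
      (SetLike.coe_mem _)
    rw [← inner_conj_symm, this, map_zero]
  have hvk : ⟪v, ξ k⟫_ℂ = ((‖v‖ : ℂ)) ^ 2 := by
    have hsum : v + ((Submodule.orthogonalProjection N (ξ k) : N) : H) = ξ k := by
      rw [hv]; abel
    rw [← hsum, inner_add_right, hproj, add_zero, inner_self_eq_norm_sq_to_K]
    norm_cast
  have hvne : v ≠ 0 := by
    intro h0
    apply hmin k
    have h1 : ξ k = (Submodule.orthogonalProjection N (ξ k) : H) := sub_eq_zero.1 (hv ▸ h0)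
    rw [← Submodule.topologicalClosure_coe]
    exact h1 ▸ SetLike.coe_mem _
  have hzero' : ∀ n, n ≠ k → ⟪ξ n, v⟫_ℂ = 0 := by
    intro n hn
    rw [← inner_conj_symm, hzero n hn, map_zero]
  have hvk' : ⟪ξ k, v⟫_ℂ = ((‖v‖ : ℂ)) ^ 2 := by
    rw [← inner_conj_symm, hvk, map_pow, Complex.conj_ofReal]
  have hdom : v ∈ domC ξ := by
    apply memℓp_gen
    apply summable_of_ne_finset_zero (s := {k})
    intro n hn
    have hne : n ≠ k := by simpa using hn
    simp [hzero' n hne]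
  exact ⟨v, hdom, hvne, hzero, hvk, hzero', hvk'⟩

lemma st11_inner_partial {ξ : ℕ → H} {a : ℕ → ℂ} {x v : H} {k : ℕ}
    (hv : ∀ n, n ≠ k → ⟪v, ξ n⟫_ℂ = 0)
    (hlim : Tendsto (fun m : ℕ => ∑ n ∈ Finset.range m, a n • ξ n) atTop (𝓝 x)) :
    ⟪v, x⟫_ℂ = a k * ⟪v, ξ k⟫_ℂ := by
  have h1 : Tendsto (fun m : ℕ => ⟪v, ∑ n ∈ Finset.range m, a n • ξ n⟫_ℂ) atTop
      (𝓝 ⟪v, x⟫_ℂ) := tendsto_const_nhds.inner hlim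
  have h2 : ∀ m : ℕ, k < m →
      ⟪v, ∑ n ∈ Finset.range m, a n • ξ n⟫_ℂ = a k * ⟪v, ξ k⟫_ℂ := by
    intro m hm
    rw [inner_sum, Finset.sum_eq_single_of_mem k (Finset.mem_range.2 hm)]
    · rw [inner_smul_right]
    · intro n _ hn
      rw [inner_smul_right, hv n hn, mul_zero]
  have h3 : Tendsto (fun _ : ℕ => a k * ⟪v, ξ k⟫_ℂ) atTop (𝓝 ⟪v, x⟫_ℂ) := by
    refine Tendsto.congr' ?_ h1
    filter_upwards [eventually_ge_atTop (k + 1)] with m hm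
    exact h2 m hm
  exact (tendsto_nhds_unique tendsto_const_nhds h3).symm

lemma st11_unique (ξ : ℕ → H)
    (hmin : ∀ k : ℕ, ξ k ∉ closure ((Submodule.span ℂ (ξ '' {n : ℕ | n ≠ k}) : Submodule ℂ H) : Set H))
    {f : H} {a b : ℕ → ℂ}
    (ha : Tendsto (fun m : ℕ => ∑ n ∈ Finset.range m, a n • ξ n) atTop (𝓝 f))
    (hb : Tendsto (fun m : ℕ => ∑ n ∈ Finset.range m, b n • ξ n) atTop (𝓝 f)) : a = b := by
  funext k
  obtain ⟨v, -, hvne, hv1, hv2, -, -⟩ := st11_bio ξ hmin k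
  have h1 := st11_inner_partial hv1 ha
  have h2 := st11_inner_partial hv1 hb
  have h3 : a k * ⟪v, ξ k⟫_ℂ = b k * ⟪v, ξ k⟫_ℂ := by rw [← h1, ← h2]
  have hne : ⟪v, ξ k⟫_ℂ ≠ 0 := by
    rw [hv2]
    exact pow_ne_zero _ (Complex.ofReal_ne_zero.2 (norm_ne_zero_iff.2 hvne))
  exact mul_right_cancel₀ hne h3

/-- Let `ξ` be a minimal sequence which is also a lower semi-frame of `H`.
Then `S_ξ = T_ξ` (equality of domains included) if and only if `ξ` is a Schauder basis of `H`,
i.e. every `f ∈ H` has a unique representation `f = Σ_n a_n ξ_n` (norm convergence of the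
ordered partial sums). -/
theorem statement11 (ξ : ℕ → H)
    (hmin : ∀ k : ℕ, ξ k ∉ closure ((Submodule.span ℂ (ξ '' {n : ℕ | n ≠ k}) : Submodule ℂ H) : Set H))
    (A : ℝ) (hA : 0 < A)
    (hlow : ∀ f : H, ENNReal.ofReal (A * ‖f‖ ^ 2) ≤ ∑' n : ℕ, ((‖⟪ξ n, f⟫_ℂ‖₊ : ℝ≥0∞) ^ 2))
    (Sfun : H → H)
    (hS : ∀ f ∈ domS ξ,
      Tendsto (fun k : ℕ => ∑ n ∈ Finset.range k, ⟪ξ n, f⟫_ℂ • ξ n) atTop (𝓝 (Sfun f)))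
    (Tfun : H → H)
    (hT : ∀ f ∈ domT ξ, Tfun f ∈ closure (domC ξ) ∧
      ∀ g ∈ domC ξ, ∑' n : ℕ, ⟪ξ n, f⟫_ℂ * ⟪g, ξ n⟫_ℂ = ⟪g, Tfun f⟫_ℂ) :
    (domS ξ = domT ξ ∧ ∀ f ∈ domS ξ, Sfun f = Tfun f)
      ↔ ∀ f : H, ∃! a : ℕ → ℂ,
          Tendsto (fun k : ℕ => ∑ n ∈ Finset.range k, a n • ξ n) atTop (𝓝 f) := by
  have hclosure : closure (domC ξ) = ((st11Dsub ξ).topologicalClosure : Set H) :=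
    (Submodule.topologicalClosure_coe (st11Dsub ξ)).symm
  constructor
  · rintro ⟨hdom, heq⟩ f
    -- Step 1 : every ξ k belongs to M := closure of the domain of C
    have hXiM : ∀ k : ℕ, ξ k ∈ (st11Dsub ξ).topologicalClosure := by
      intro k
      obtain ⟨v, hvdom, hvne, hv1, hv2, hv1', hv2'⟩ := st11_bio ξ hmin k
      set M := (st11Dsub ξ).topologicalClosure with hM
      haveI : CompleteSpace M := Submodule.topologicalClosure.completeSpace _
      -- v belongs to domT
      have hvT : v ∈ domT ξ := by
        refine ⟨hvdom, ((‖v‖ : ℂ) ^ 2) • ((Submodule.orthogonalProjection M (ξ k) : M) : H), ?_, ?_⟩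
        · rw [hclosure]
          exact M.smul_mem _ (SetLike.coe_mem _)
        · intro g hg
          rw [tsum_eq_single k ?_]
          · have hgM : g ∈ M := Submodule.le_topologicalClosure _ hg
            have hperp : ξ k - ((Submodule.orthogonalProjection M (ξ k) : M) : H) ∈ Mᗮ :=
              Submodule.sub_starProjection_mem_orthogonal (K := M) (ξ k)
            have h0 := (Submodule.mem_orthogonal M _).1 hperp g hgM
            rw [inner_sub_right] at h0
            have h2 : ⟪g, ((Submodule.orthogonalProjection M (ξ k) : M) : H)⟫_ℂ = ⟪g, ξ k⟫_ℂ :=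
              (sub_eq_zero.1 h0).symm
            rw [inner_smul_right, h2, hv2']
          · intro n hn
            rw [hv1' n hn, zero_mul]
      have hvS : v ∈ domS ξ := by rw [hdom]; exact hvT
      -- the value of S on v
      have hvS_lim : Tendsto (fun m : ℕ => ∑ n ∈ Finset.range m, ⟪ξ n, v⟫_ℂ • ξ n) atTop
          (𝓝 (((‖v‖ : ℂ) ^ 2) • ξ k)) := by
        have hconst : ∀ m : ℕ, k < m →
            ∑ n ∈ Finset.range m, ⟪ξ n, v⟫_ℂ • ξ n = ((‖v‖ : ℂ) ^ 2) • ξ k := by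
          intro m hm
          rw [Finset.sum_eq_single_of_mem k (Finset.mem_range.2 hm)]
          · rw [hv2']
          · intro n _ hn
            rw [hv1' n hn, zero_smul]
        refine Tendsto.congr' ?_ tendsto_const_nhds
        filter_upwards [eventually_ge_atTop (k + 1)] with m hm
        exact (hconst m hm).symm
      have hSv : Sfun v = ((‖v‖ : ℂ) ^ 2) • ξ k := tendsto_nhds_unique (hS v hvS) hvS_lim
      have hsm : ((‖v‖ : ℂ) ^ 2) • ξ k ∈ M := by
        rw [← hSv, heq v hvS]
        have := (hT v hvT).1
        rwa [hclosure] at this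
      have hne : ((‖v‖ : ℂ) ^ 2) ≠ 0 :=
        pow_ne_zero _ (Complex.ofReal_ne_zero.2 (norm_ne_zero_iff.2 hvne))
      have := M.smul_mem (((‖v‖ : ℂ) ^ 2)⁻¹) hsm
      rwa [smul_smul, inv_mul_cancel₀ hne, one_smul] at this
    -- Step 2 : density
    have hMtop : (st11Dsub ξ).topologicalClosure = ⊤ := by
      haveI : CompleteSpace ((st11Dsub ξ).topologicalClosure) :=
        Submodule.topologicalClosure.completeSpace _
      rw [← Submodule.orthogonal_eq_bot_iff]
      rw [Submodule.eq_bot_iff]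
      intro u hu
      refine st11_total ξ hA hlow fun n => ?_
      exact (Submodule.mem_orthogonal _ u).1 hu _ (hXiM n)
    have huniv := st11_closure_univ ξ hMtop
    -- Step 3 : solve T f₀ = f
    obtain ⟨f0, hf0C, hf0⟩ := st11_weak_solution ξ hA hlow f
    have hf0T : f0 ∈ domT ξ := ⟨hf0C, f, by rw [huniv]; trivial, hf0⟩
    have hf0S : f0 ∈ domS ξ := by rw [hdom]; exact hf0T
    have hTf0 : Tfun f0 = f :=
      (st11_dense_eq ξ hMtop fun g hg => by rw [← (hT f0 hf0T).2 g hg, hf0 g hg])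
    have hlim := hS f0 hf0S
    rw [heq f0 hf0S, hTf0] at hlim
    exact ⟨fun n => ⟪ξ n, f0⟫_ℂ, hlim, fun b hb => st11_unique ξ hmin hb hlim⟩
  · intro hB
    -- density from the Schauder basis property
    have hMtop : (st11Dsub ξ).topologicalClosure = ⊤ := by
      haveI : CompleteSpace ((st11Dsub ξ).topologicalClosure) :=
        Submodule.topologicalClosure.completeSpace _
      rw [← Submodule.orthogonal_eq_bot_iff, Submodule.eq_bot_iff]
      intro u hu
      obtain ⟨a, ha, -⟩ := hB u
      have hak : ∀ k : ℕ, a k = 0 := by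
        intro k
        obtain ⟨v, hvdom, hvne, hv1, hv2, -, -⟩ := st11_bio ξ hmin k
        have hvM : v ∈ (st11Dsub ξ).topologicalClosure :=
          Submodule.le_topologicalClosure _ hvdom
        have hvu : ⟪v, u⟫_ℂ = 0 := (Submodule.mem_orthogonal _ u).1 hu v hvM
        have h1 := st11_inner_partial hv1 ha
        rw [hvu, hv2] at h1
        have hne : ((‖v‖ : ℂ) ^ 2) ≠ 0 :=
          pow_ne_zero _ (Complex.ofReal_ne_zero.2 (norm_ne_zero_iff.2 hvne))
        field_simp at h1
        exact (mul_eq_zero.1 h1.symm).resolve_right hne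
      have hz : ∀ m : ℕ, ∑ n ∈ Finset.range m, a n • ξ n = 0 :=
        fun m => Finset.sum_eq_zero fun n _ => by rw [hak n, zero_smul]
      have : Tendsto (fun _ : ℕ => (0 : H)) atTop (𝓝 u) := ha.congr hz
      exact tendsto_nhds_unique this tendsto_const_nhds
    have huniv := st11_closure_univ ξ hMtop
    -- domS ⊆ domT
    have hsub1 : domS ξ ⊆ domT ξ := by
      rintro f ⟨L, hL⟩
      exact ⟨st11_domS_memC hL, L, by rw [huniv]; trivial,
        fun g hg => st11_tsum_eq_inner hg hL⟩
    -- domT ⊆ domS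
    have hsub2 : domT ξ ⊆ domS ξ := by
      intro f hfT
      obtain ⟨hTmem, hTeq⟩ := hT f hfT
      obtain ⟨a, ha, -⟩ := hB (Tfun f)
      have hak : ∀ k : ℕ, a k = ⟪ξ k, f⟫_ℂ := by
        intro k
        obtain ⟨v, hvdom, hvne, hv1, hv2, hv1', -⟩ := st11_bio ξ hmin k
        have h1 := st11_inner_partial hv1 ha
        have h2 := hTeq v hvdom
        rw [tsum_eq_single k (fun n hn => by rw [hv1 n hn, mul_zero])] at h2
        have hne : ⟪v, ξ k⟫_ℂ ≠ 0 := by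
          rw [hv2]
          exact pow_ne_zero _ (Complex.ofReal_ne_zero.2 (norm_ne_zero_iff.2 hvne))
        rw [h1] at h2
        exact (mul_right_cancel₀ hne h2).symm
      refine ⟨Tfun f, ?_⟩
      refine Tendsto.congr (fun m => Finset.sum_congr rfl fun n _ => by rw [hak n]) ha
    have hdom : domS ξ = domT ξ := Set.Subset.antisymm hsub1 hsub2
    refine ⟨hdom, ?_⟩
    intro f hfS
    obtain ⟨L, hL⟩ := hfS
    have hfS' : f ∈ domS ξ := ⟨L, hL⟩
    have hSf : Sfun f = L := tendsto_nhds_unique (hS f hfS') hL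
    have hfT : f ∈ domT ξ := hsub1 hfS'
    obtain ⟨hTmem, hTeq⟩ := hT f hfT
    refine st11_dense_eq ξ hMtop fun g hg => ?_
    rw [hSf, ← hTeq g hg, st11_tsum_eq_inner hg hL]
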